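/- Let K be a field, p, s ∈ K, and set A = ![![0, p], ![0, 0]] and B = ![![0, s], ![0, 0]] (2×2 matrices over K). Then there exists G ∈ SL(2, K) with G * A * G⁻¹ = B if and only if there exists x ∈ Kˣ (a nonzero element of K) such that x²·p = s. -/

import Mathlib

/-- The strictly upper triangular 2×2 matrices `A = !![0, p; 0, 0]` and
`B = !![0, s; 0, 0]` are conjugate by an element of `SL(2, K)` iff `s = x² p`
for some nonzero `x ∈ K`. -/
theorem nilpotent_sl2_conjugacy {K : Type*} [Field K] (p s : K) :
    (∃ G : Matrix.SpecialLinearGroup (Fin 2) K,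
        (G : Matrix (Fin 2) (Fin 2) K) * !![0, p; 0, 0] *
          ((G⁻¹ : Matrix.SpecialLinearGroup (Fin 2) K) : Matrix (Fin 2) (Fin 2) K)
          = !![0, s; 0, 0]) ↔
      ∃ x : Kˣ, (x : K) ^ 2 * p = s := by
  constructor
  · rintro ⟨G, hG⟩
    have hdet : (G : Matrix (Fin 2) (Fin 2) K).det = 1 := G.prop
    rw [Matrix.det_fin_two] at hdet
    rw [Matrix.SpecialLinearGroup.coe_inv] at hG
    set a := (G : Matrix (Fin 2) (Fin 2) K) 0 0
    set b := (G : Matrix (Fin 2) (Fin 2) K) 0 1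
    set c := (G : Matrix (Fin 2) (Fin 2) K) 1 0
    set d := (G : Matrix (Fin 2) (Fin 2) K) 1 1
    have hM : (G : Matrix (Fin 2) (Fin 2) K) = !![a, b; c, d] := by
      ext i j; fin_cases i <;> fin_cases j <;> rfl
    rw [hM] at hG
    rw [Matrix.adjugate_fin_two] at hG
    have h00 := congrFun (congrFun hG 0) 0
    have h01 := congrFun (congrFun hG 0) 1
    have h10 := congrFun (congrFun hG 1) 0
    simp [Matrix.mul_apply, Fin.sum_univ_two] at h00 h01 h10
    by_cases hp : p = 0
    · exact ⟨1, by simpa [hp] using h01⟩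
    · have hc : c = 0 := by rcases h10 with (h | h) | h <;> tauto
      have ha : a ≠ 0 := by
        intro h; rw [h, hc] at hdet; simp at hdet
      exact ⟨Units.mk0 a ha, by rw [Units.val_mk0, sq]; linear_combination h01⟩
  · rintro ⟨x, hx⟩
    refine ⟨⟨!![(x:K), 0; 0, (x:K)⁻¹], ?_⟩, ?_⟩
    · simp [Matrix.det_fin_two_of, mul_inv_cancel₀ x.ne_zero]
    · erw [Matrix.SpecialLinearGroup.coe_inv]
      have : ((⟨!![(x:K), 0; 0, (x:K)⁻¹], by simp [Matrix.det_fin_two_of, mul_inv_cancel₀ x.ne_zero]⟩ : Matrix.SpecialLinearGroup (Fin 2) K) : Matrix (Fin 2) (Fin 2) K) = !![(x:K), 0; 0, (x:K)⁻¹] := rfl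
      rw [this, Matrix.adjugate_fin_two]
      ext i j
      fin_cases i <;> fin_cases j <;>
        simp [Matrix.mul_apply, Fin.sum_univ_two] <;> ring_nf
      rw [sq] at hx; linear_combination hx
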